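/- Let 1 < q < ∞. For every monotonically decreasing f : (0,∞) → [0,∞): (i) sup_{t>0} t·(1/t · ∫_t^∞ f(s)^q ds)^{1/q} ≤ (q−1)^{−1/q} · sup_{t>0} t·f(t) with optimal constant (q−1)^{−1/q}; (ii) sup_{t>0} t·f(t) ≤ (1/q)^{−1/q}·(1−1/q)^{−(1−1/q)} · sup_{t>0} t·(1/t · ∫_t^∞ f(s)^q ds)^{1/q} with optimal constant (1/q)^{−1/q}(1−1/q)^{−(1−1/q)}. -/

import Mathlib

open Real MeasureTheory
open scoped ENNReal

lemma ws_lint_inv {q : ℝ} (hq : 1 < q) {t : ℝ} (ht : 0 < t) :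
    ∫⁻ s in Set.Ioi t, ENNReal.ofReal (1 / s) ^ q
      = ENNReal.ofReal (t ^ (1 - q) / (q - 1)) := by
  have hcong : ∀ s ∈ Set.Ioi t, ENNReal.ofReal (1 / s) ^ q
      = ENNReal.ofReal (s ^ (-q)) := by
    intro s hs
    have hs0 : 0 < s := ht.trans hs
    rw [ENNReal.ofReal_rpow_of_pos (by positivity)]
    congr 1
    rw [Real.rpow_neg hs0.le, ← Real.inv_rpow hs0.le, one_div]
  have hnn : 0 ≤ᵐ[volume.restrict (Set.Ioi t)] fun s : ℝ => s ^ (-q) := by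
    filter_upwards [ae_restrict_mem measurableSet_Ioi] with s hs
    have hs0 : 0 < s := ht.trans hs
    positivity
  rw [setLIntegral_congr_fun measurableSet_Ioi (fun s hs => hcong s hs),
    ← ofReal_integral_eq_lintegral_ofReal (integrableOn_Ioi_rpow_of_lt (by linarith) ht) hnn,
    integral_Ioi_rpow_of_lt (by linarith) ht]
  congr 1
  have h1 : -q + 1 = 1 - q := by ring
  rw [h1]
  rw [div_eq_div_iff (by linarith : (1:ℝ) - q ≠ 0) (by linarith : q - 1 ≠ 0)]
  ring

lemma ws_term_inv {q : ℝ} (hq : 1 < q) {t : ℝ} (ht : 0 < t) :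
    ENNReal.ofReal t * ((1 / ENNReal.ofReal t) * ENNReal.ofReal (t ^ (1 - q) / (q - 1))) ^ (1 / q)
      = ENNReal.ofReal ((q - 1) ^ (-(1 / q))) := by
  have hq0 : (0:ℝ) < q := by linarith
  have hq1 : (0:ℝ) < q - 1 := by linarith
  have h1 : (1:ℝ≥0∞) / ENNReal.ofReal t = ENNReal.ofReal t⁻¹ := by
    rw [one_div, ← ENNReal.ofReal_inv_of_pos ht]
  rw [h1, ← ENNReal.ofReal_mul (by positivity),
    ENNReal.ofReal_rpow_of_nonneg (x := t⁻¹ * (t ^ (1 - q) / (q - 1))) (by positivity)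
      (one_div_nonneg.mpr hq0.le),
    ← ENNReal.ofReal_mul ht.le]
  congr 1
  have e1 : t⁻¹ * (t ^ (1 - q) / (q - 1)) = t ^ (-q) * (q - 1)⁻¹ := by
    rw [div_eq_mul_inv, ← mul_assoc, ← Real.rpow_neg_one t, ← Real.rpow_add ht]
    ring_nf
  rw [e1, Real.mul_rpow (by positivity) (by positivity), ← Real.rpow_mul ht.le,
    show -q * (1 / q) = -1 by field_simp, Real.rpow_neg_one,
    ← Real.rpow_neg_one (q - 1), ← Real.rpow_mul hq1.le,
    show (-1:ℝ) * (1 / q) = -(1 / q) by ring, ← mul_assoc, mul_inv_cancel₀ ht.ne', one_mul]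

instance : Nonempty {t : ℝ // 0 < t} := ⟨⟨1, one_pos⟩⟩

lemma ws_part2 {q : ℝ} (hq : 1 < q) :
    (⨆ t : {t : ℝ // 0 < t}, ENNReal.ofReal t.1 *
        ((1 / ENNReal.ofReal t.1) * ∫⁻ s in Set.Ioi t.1,
          ENNReal.ofReal (1 / s) ^ q) ^ (1 / q)) =
      ENNReal.ofReal ((q - 1) ^ (-(1 / q))) *
        ⨆ t : {t : ℝ // 0 < t}, ENNReal.ofReal (t.1 * (1 / t.1)) := by
  have h1 : (⨆ t : {t : ℝ // 0 < t}, ENNReal.ofReal t.1 *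
      ((1 / ENNReal.ofReal t.1) * ∫⁻ s in Set.Ioi t.1,
        ENNReal.ofReal (1 / s) ^ q) ^ (1 / q))
      = ⨆ _ : {t : ℝ // 0 < t}, ENNReal.ofReal ((q - 1) ^ (-(1 / q))) := by
    apply iSup_congr
    rintro ⟨t, ht⟩
    rw [ws_lint_inv hq ht, ws_term_inv hq ht]
  have h2 : (⨆ t : {t : ℝ // 0 < t}, ENNReal.ofReal (t.1 * (1 / t.1)))
      = ⨆ _ : {t : ℝ // 0 < t}, (1 : ℝ≥0∞) := by
    apply iSup_congr
    rintro ⟨t, ht⟩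
    rw [mul_one_div_cancel ht.ne', ENNReal.ofReal_one]
  rw [h1, h2, iSup_const, iSup_const, mul_one]

lemma ws_part1 {q : ℝ} (hq : 1 < q) (f : ℝ → ℝ) (hf : Measurable f)
    (hfnn : ∀ t, 0 < t → 0 ≤ f t) (hfa : AntitoneOn f (Set.Ioi 0)) :
    (⨆ t : {t : ℝ // 0 < t}, ENNReal.ofReal t.1 *
        ((1 / ENNReal.ofReal t.1) * ∫⁻ s in Set.Ioi t.1, ENNReal.ofReal (f s) ^ q) ^ (1 / q)) ≤
      ENNReal.ofReal ((q - 1) ^ (-(1 / q))) *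
        ⨆ t : {t : ℝ // 0 < t}, ENNReal.ofReal (t.1 * f t.1) := by
  have hq0 : (0 : ℝ) < q := by linarith
  have hq1 : (0 : ℝ) < q - 1 := by linarith
  have hcpos : (0 : ℝ) < (q - 1) ^ (-(1 / q)) := by positivity
  set M := ⨆ t : {t : ℝ // 0 < t}, ENNReal.ofReal (t.1 * f t.1) with hM
  by_cases hMtop : M = ⊤
  · rw [hMtop, ENNReal.mul_top (ENNReal.ofReal_pos.mpr hcpos).ne']
    exact le_top
  set m := M.toReal with hm
  have hm0 : 0 ≤ m := ENNReal.toReal_nonneg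
  have hmM : ENNReal.ofReal m = M := ENNReal.ofReal_toReal hMtop
  have hfs : ∀ s, 0 < s → f s ≤ m * (1 / s) := by
    intro s hs
    have h1 : ENNReal.ofReal (s * f s) ≤ M :=
      le_iSup (fun u : {t : ℝ // 0 < t} => ENNReal.ofReal (u.1 * f u.1)) ⟨s, hs⟩
    rw [← hmM, ENNReal.ofReal_le_ofReal_iff hm0] at h1
    rw [mul_one_div, le_div_iff₀ hs]
    linarith [mul_comm s (f s)]
  apply iSup_le
  rintro ⟨t, ht⟩
  have hintle : (∫⁻ s in Set.Ioi t, ENNReal.ofReal (f s) ^ q)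
      ≤ ENNReal.ofReal m ^ q * ENNReal.ofReal (t ^ (1 - q) / (q - 1)) := by
    rw [← ws_lint_inv hq ht, ← lintegral_const_mul'' _ (by fun_prop)]
    apply setLIntegral_mono' measurableSet_Ioi
    intro s hs
    have hs0 : 0 < s := ht.trans hs
    calc ENNReal.ofReal (f s) ^ q ≤ ENNReal.ofReal (m * (1 / s)) ^ q :=
          ENNReal.rpow_le_rpow (ENNReal.ofReal_le_ofReal (hfs s hs0)) hq0.le
      _ = ENNReal.ofReal m ^ q * ENNReal.ofReal (1 / s) ^ q := by
          rw [ENNReal.ofReal_mul hm0, ENNReal.mul_rpow_of_nonneg _ _ hq0.le]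
  calc ENNReal.ofReal t * ((1 / ENNReal.ofReal t) * ∫⁻ s in Set.Ioi t,
        ENNReal.ofReal (f s) ^ q) ^ (1 / q)
      ≤ ENNReal.ofReal t * ((1 / ENNReal.ofReal t) *
          (ENNReal.ofReal m ^ q * ENNReal.ofReal (t ^ (1 - q) / (q - 1)))) ^ (1 / q) := by
        gcongr
    _ = ENNReal.ofReal m * (ENNReal.ofReal t *
          ((1 / ENNReal.ofReal t) * ENNReal.ofReal (t ^ (1 - q) / (q - 1))) ^ (1 / q)) := by
        rw [mul_left_comm (1 / ENNReal.ofReal t), ENNReal.mul_rpow_of_nonneg _ _ (by positivity),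
          ← ENNReal.rpow_mul, mul_one_div_cancel hq0.ne', ENNReal.rpow_one, mul_left_comm]
    _ = ENNReal.ofReal ((q - 1) ^ (-(1 / q))) * M := by
        rw [ws_term_inv hq ht, hmM, mul_comm]

lemma ws_real3 {q t x : ℝ} (hq : 1 < q) (ht : 0 < t) (hx : 0 ≤ x) :
    ((1 - 1/q) * t) * ((((1 - 1/q) * t))⁻¹ * (x ^ q * (t - (1 - 1/q) * t))) ^ (1/q)
      = ((1 - 1/q) ^ (1 - 1/q) * (1/q) ^ (1/q)) * (t * x) := by
  have hq0 : (0:ℝ) < q := lt_trans one_pos hq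
  have hw : (0:ℝ) < 1 - 1/q := by
    rw [sub_pos, div_lt_one hq0]; exact hq
  have h1 : t - (1 - 1/q) * t = (1/q) * t := by ring
  have h2 : ((1 - 1/q) * t)⁻¹ * (x ^ q * ((1/q) * t)) = x ^ q * ((1/q) * (1 - 1/q)⁻¹) := by
    calc ((1 - 1/q) * t)⁻¹ * (x ^ q * ((1/q) * t))
        = x ^ q * (((1/q) * t) / ((1 - 1/q) * t)) := by rw [div_eq_mul_inv]; ring
      _ = x ^ q * ((1/q) / (1 - 1/q)) := by rw [mul_div_mul_right _ _ ht.ne']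
      _ = x ^ q * ((1/q) * (1 - 1/q)⁻¹) := by rw [div_eq_mul_inv]
  rw [h1, h2, Real.mul_rpow (by positivity) (by positivity),
    Real.mul_rpow (by positivity) (by positivity), ← Real.rpow_mul hx,
    mul_one_div_cancel hq0.ne', Real.rpow_one, Real.inv_rpow hw.le, ← Real.rpow_neg hw.le]
  have h3 : (1 - 1/q) * (1 - 1/q) ^ (-(1/q)) = (1 - 1/q) ^ (1 - 1/q) := by
    nth_rewrite 1 [← Real.rpow_one (1 - 1/q)]
    rw [← Real.rpow_add hw]
    congr 1
  rw [← h3]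
  ring

lemma ws_part3 {q : ℝ} (hq : 1 < q) (f : ℝ → ℝ) (hf : Measurable f)
    (hfnn : ∀ t, 0 < t → 0 ≤ f t) (hfa : AntitoneOn f (Set.Ioi 0)) :
    (⨆ t : {t : ℝ // 0 < t}, ENNReal.ofReal (t.1 * f t.1)) ≤
      ENNReal.ofReal ((1 / q) ^ (-(1 / q)) * (1 - 1 / q) ^ (-(1 - 1 / q))) *
        ⨆ t : {t : ℝ // 0 < t}, ENNReal.ofReal t.1 *
          ((1 / ENNReal.ofReal t.1) * ∫⁻ s in Set.Ioi t.1,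
            ENNReal.ofReal (f s) ^ q) ^ (1 / q) := by
  have hq0 : (0:ℝ) < q := lt_trans one_pos hq
  have hq' : (0:ℝ) < 1/q := by positivity
  have hw : (0:ℝ) < 1 - 1/q := by rw [sub_pos, div_lt_one hq0]; exact hq
  have hCK : ((1/q) ^ (-(1/q)) * (1 - 1/q) ^ (-(1 - 1/q))) *
      ((1 - 1/q) ^ (1 - 1/q) * (1/q) ^ (1/q)) = 1 := by
    rw [Real.rpow_neg hq'.le, Real.rpow_neg hw.le, mul_comm (((1/q:ℝ)) ^ (1/q))⁻¹,
      mul_mul_mul_comm, inv_mul_cancel₀ (Real.rpow_pos_of_pos hw _).ne',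
      inv_mul_cancel₀ (Real.rpow_pos_of_pos hq' _).ne', one_mul]
  apply iSup_le
  rintro ⟨t, ht⟩
  have ha : (0:ℝ) < (1 - 1/q) * t := by positivity
  have hta : t - (1 - 1/q) * t = (1/q) * t := by ring
  have hat : (1 - 1/q) * t < t := by nlinarith [mul_pos hq' ht]
  have hJ : ENNReal.ofReal (f t) ^ q * ENNReal.ofReal (t - (1 - 1/q) * t)
      ≤ ∫⁻ s in Set.Ioi ((1 - 1/q) * t), ENNReal.ofReal (f s) ^ q := by
    calc ENNReal.ofReal (f t) ^ q * ENNReal.ofReal (t - (1 - 1/q) * t)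
        = ∫⁻ _ in Set.Ioo ((1 - 1/q) * t) t, ENNReal.ofReal (f t) ^ q := by
          rw [setLIntegral_const, Real.volume_Ioo]
      _ ≤ ∫⁻ s in Set.Ioo ((1 - 1/q) * t) t, ENNReal.ofReal (f s) ^ q := by
          apply setLIntegral_mono' measurableSet_Ioo
          intro s hs
          exact ENNReal.rpow_le_rpow (ENNReal.ofReal_le_ofReal
            (hfa (Set.mem_Ioi.mpr (ha.trans hs.1)) (Set.mem_Ioi.mpr ht) hs.2.le)) hq0.le
      _ ≤ ∫⁻ s in Set.Ioi ((1 - 1/q) * t), ENNReal.ofReal (f s) ^ q :=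
          lintegral_mono_set Set.Ioo_subset_Ioi_self
  have hL : ENNReal.ofReal ((1 - 1/q) * t) * ((1 / ENNReal.ofReal ((1 - 1/q) * t)) *
      (ENNReal.ofReal (f t) ^ q * ENNReal.ofReal (t - (1 - 1/q) * t))) ^ (1/q)
      = ENNReal.ofReal ((((1 - 1/q) ^ (1 - 1/q) * (1/q) ^ (1/q))) * (t * f t)) := by
    have hinv : (1:ℝ≥0∞) / ENNReal.ofReal ((1 - 1/q) * t)
        = ENNReal.ofReal (((1 - 1/q) * t)⁻¹) := by
      rw [one_div, ← ENNReal.ofReal_inv_of_pos ha]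
    rw [hinv, ENNReal.ofReal_rpow_of_nonneg (hfnn t ht) hq0.le,
      ← ENNReal.ofReal_mul (Real.rpow_nonneg (hfnn t ht) q),
      ← ENNReal.ofReal_mul (inv_nonneg.mpr ha.le),
      ENNReal.ofReal_rpow_of_nonneg (mul_nonneg (inv_nonneg.mpr ha.le)
        (mul_nonneg (Real.rpow_nonneg (hfnn t ht) q) (sub_nonneg.mpr hat.le))) hq'.le,
      ← ENNReal.ofReal_mul ha.le]
    exact congrArg _ (ws_real3 hq ht (hfnn t ht))
  calc ENNReal.ofReal (t * f t)
      = ENNReal.ofReal ((1/q) ^ (-(1/q)) * (1 - 1/q) ^ (-(1 - 1/q))) *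
        ENNReal.ofReal ((((1 - 1/q) ^ (1 - 1/q) * (1/q) ^ (1/q))) * (t * f t)) := by
        rw [← ENNReal.ofReal_mul (mul_nonneg (Real.rpow_nonneg hq'.le _)
          (Real.rpow_nonneg hw.le _)), ← mul_assoc, hCK, one_mul]
    _ = ENNReal.ofReal ((1/q) ^ (-(1/q)) * (1 - 1/q) ^ (-(1 - 1/q))) *
        (ENNReal.ofReal ((1 - 1/q) * t) * ((1 / ENNReal.ofReal ((1 - 1/q) * t)) *
          (ENNReal.ofReal (f t) ^ q * ENNReal.ofReal (t - (1 - 1/q) * t))) ^ (1/q)) := by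
        rw [hL]
    _ ≤ ENNReal.ofReal ((1/q) ^ (-(1/q)) * (1 - 1/q) ^ (-(1 - 1/q))) *
        (ENNReal.ofReal ((1 - 1/q) * t) * ((1 / ENNReal.ofReal ((1 - 1/q) * t)) *
          ∫⁻ s in Set.Ioi ((1 - 1/q) * t), ENNReal.ofReal (f s) ^ q) ^ (1/q)) := by
        gcongr
    _ ≤ ENNReal.ofReal ((1/q) ^ (-(1/q)) * (1 - 1/q) ^ (-(1 - 1/q))) *
        ⨆ t : {t : ℝ // 0 < t}, ENNReal.ofReal t.1 *
          ((1 / ENNReal.ofReal t.1) * ∫⁻ s in Set.Ioi t.1,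
            ENNReal.ofReal (f s) ^ q) ^ (1 / q) := by
        gcongr
        exact le_iSup (fun u : {t : ℝ // 0 < t} => ENNReal.ofReal u.1 *
          ((1 / ENNReal.ofReal u.1) * ∫⁻ s in Set.Ioi u.1,
            ENNReal.ofReal (f s) ^ q) ^ (1 / q)) ⟨(1 - 1/q) * t, ha⟩

-- real lemmas for part 4
lemma ws_real4 {q t T : ℝ} (hq : 1 < q) (ht : 0 < t) (hT : 0 < T) (htT : t < T) :
    t * (t⁻¹ * ((1/T) ^ q * (T - t))) ^ (1/q)
      = t ^ (1 - 1/q) * (T - t) ^ (1/q) * (1/T) := by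
  have hq0 : (0:ℝ) < q := lt_trans one_pos hq
  have hT' : (0:ℝ) ≤ 1/T := (one_div_pos.mpr hT).le
  rw [Real.mul_rpow (inv_nonneg.mpr ht.le)
      (mul_nonneg (Real.rpow_nonneg hT' q) (sub_nonneg.mpr htT.le)),
    Real.mul_rpow (Real.rpow_nonneg hT' q) (sub_nonneg.mpr htT.le),
    ← Real.rpow_mul hT', mul_one_div_cancel hq0.ne', Real.rpow_one,
    Real.inv_rpow ht.le, ← Real.rpow_neg ht.le]
  have h1 : t * t ^ (-(1/q)) = t ^ (1 - 1/q) := by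
    nth_rewrite 1 [← Real.rpow_one t]
    rw [← Real.rpow_add ht]
    congr 1
  rw [← h1]
  ring

lemma ws_amgm {q t T : ℝ} (hq : 1 < q) (hT : 0 < T) (ht : 0 < t) (htT : t < T) :
    t ^ (1 - 1/q) * (T - t) ^ (1/q) ≤ ((1 - 1/q) ^ (1 - 1/q) * (1/q) ^ (1/q)) * T := by
  have hq0 : (0:ℝ) < q := lt_trans one_pos hq
  have hq' : (0:ℝ) < 1/q := by positivity
  have hw : (0:ℝ) < 1 - 1/q := by rw [sub_pos, div_lt_one hq0]; exact hq
  have h := Real.geom_mean_le_arith_mean2_weighted hw.le hq'.le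
    (div_nonneg ht.le hw.le) (div_nonneg (sub_nonneg.mpr htT.le) hq'.le)
    (by ring : (1 - 1/q) + 1/q = 1)
  rw [mul_div_cancel₀ t hw.ne', mul_div_cancel₀ (T - t) hq'.ne',
    Real.div_rpow ht.le hw.le, Real.div_rpow (sub_nonneg.mpr htT.le) hq'.le,
    div_mul_div_comm, div_le_iff₀ (by positivity)] at h
  calc t ^ (1 - 1/q) * (T - t) ^ (1/q) ≤ (t + (T - t)) * ((1 - 1/q) ^ (1 - 1/q) * (1/q) ^ (1/q)) := h
    _ = ((1 - 1/q) ^ (1 - 1/q) * (1/q) ^ (1/q)) * T := by ring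

lemma ws_eq_at {q T : ℝ} (hq : 1 < q) (hT : 0 < T) :
    ((1 - 1/q) * T) ^ (1 - 1/q) * (T - (1 - 1/q) * T) ^ (1/q) * (1/T)
      = (1 - 1/q) ^ (1 - 1/q) * (1/q) ^ (1/q) := by
  have hq0 : (0:ℝ) < q := lt_trans one_pos hq
  have hq' : (0:ℝ) < 1/q := by positivity
  have hw : (0:ℝ) < 1 - 1/q := by rw [sub_pos, div_lt_one hq0]; exact hq
  have h1 : T - (1 - 1/q) * T = (1/q) * T := by ring
  rw [h1, Real.mul_rpow hw.le hT.le, Real.mul_rpow hq'.le hT.le]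
  have h2 : T ^ (1 - 1/q) * (T ^ (1/q)) = T := by
    rw [← Real.rpow_add hT]
    norm_num
  calc (1 - 1/q) ^ (1 - 1/q) * T ^ (1 - 1/q) * ((1/q) ^ (1/q) * T ^ (1/q)) * (1/T)
      = ((1 - 1/q) ^ (1 - 1/q) * (1/q) ^ (1/q)) * ((T ^ (1 - 1/q) * T ^ (1/q)) * (1/T)) := by
        ring
    _ = (1 - 1/q) ^ (1 - 1/q) * (1/q) ^ (1/q) := by
        rw [h2, mul_one_div_cancel hT.ne', mul_one]



lemma ws_lhs4 {T : ℝ} (hT : 0 < T) :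
    (⨆ t : {t : ℝ // 0 < t},
      ENNReal.ofReal (t.1 * Set.indicator (Set.Ioo 0 T) (fun _ => 1 / T) t.1)) = 1 := by
  apply le_antisymm
  · apply iSup_le
    rintro ⟨t, ht⟩
    show ENNReal.ofReal (t * (Set.Ioo 0 T).indicator (fun _ => 1 / T) t) ≤ 1
    by_cases htT : t < T
    · rw [Set.indicator_of_mem (Set.mem_Ioo.mpr ⟨ht, htT⟩)]
      apply ENNReal.ofReal_le_one.mpr
      rw [mul_one_div, div_le_one hT]
      exact htT.le
    · rw [Set.indicator_of_notMem (fun h => htT h.2)]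
      simp
  · rw [le_iSup_iff]
    intro b hb
    by_contra hcon
    push_neg at hcon
    have hbtop : b ≠ ⊤ := hcon.ne_top
    have hb1 : b.toReal < 1 := by
      rw [← ENNReal.toReal_one]
      exact ENNReal.toReal_strict_mono ENNReal.one_ne_top hcon
    set r := max b.toReal 0 with hr
    have hr0 : 0 ≤ r := le_max_right _ _
    have hr1 : r < 1 := max_lt hb1 one_pos
    set t := ((r + 1) / 2) * T with htd
    have ht0 : 0 < t := by positivity
    have htT : t < T := by nlinarith
    have h1 : ENNReal.ofReal (t * (Set.Ioo 0 T).indicator (fun _ => 1 / T) t) ≤ b := hb ⟨t, ht0⟩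
    rw [Set.indicator_of_mem (Set.mem_Ioo.mpr ⟨ht0, htT⟩)] at h1
    have h2 : t * (1/T) ≤ b.toReal := by
      have h3 := ENNReal.toReal_mono hbtop h1
      rwa [ENNReal.toReal_ofReal (by positivity)] at h3
    have h4 : t * (1/T) = (r + 1) / 2 := by
      rw [htd, mul_one_div, mul_div_assoc, div_self hT.ne', mul_one]
    have h5 : b.toReal ≤ r := le_max_left _ _
    linarith
  
lemma ws_lint_ind {q T t : ℝ} (hq : 1 < q) (hT : 0 < T) (ht : 0 < t) :
    ∫⁻ s in Set.Ioi t, ENNReal.ofReal (Set.indicator (Set.Ioo 0 T) (fun _ => 1 / T) s) ^ q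
      = ENNReal.ofReal ((1/T) ^ q) * ENNReal.ofReal (T - t) := by
  have hq0 : (0:ℝ) < q := lt_trans one_pos hq
  have hptw : ∀ s : ℝ, ENNReal.ofReal (Set.indicator (Set.Ioo 0 T) (fun _ => 1 / T) s) ^ q
      = Set.indicator (Set.Ioo 0 T) (fun _ => ENNReal.ofReal ((1/T) ^ q)) s := by
    intro s
    by_cases hs : s ∈ Set.Ioo 0 T
    · rw [Set.indicator_of_mem hs, Set.indicator_of_mem hs,
        ENNReal.ofReal_rpow_of_pos (one_div_pos.mpr hT)]
    · rw [Set.indicator_of_notMem hs, Set.indicator_of_notMem hs, ENNReal.ofReal_zero,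
        ENNReal.zero_rpow_of_pos hq0]
  rw [lintegral_congr hptw, lintegral_indicator measurableSet_Ioo, setLIntegral_const,
    Measure.restrict_apply measurableSet_Ioo]
  have hset : Set.Ioo 0 T ∩ Set.Ioi t = Set.Ioo t T := by
    ext x
    simp only [Set.mem_inter_iff, Set.mem_Ioo, Set.mem_Ioi]
    constructor
    · rintro ⟨⟨_, h2⟩, h3⟩; exact ⟨h3, h2⟩
    · rintro ⟨h1, h2⟩; exact ⟨⟨ht.trans h1, h2⟩, h1⟩
  rw [hset, Real.volume_Ioo]

lemma ws_part4 {q : ℝ} (hq : 1 < q) (T : ℝ) (hT : 0 < T) :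
    (⨆ t : {t : ℝ // 0 < t},
        ENNReal.ofReal (t.1 * Set.indicator (Set.Ioo 0 T) (fun _ => 1 / T) t.1)) =
      ENNReal.ofReal ((1 / q) ^ (-(1 / q)) * (1 - 1 / q) ^ (-(1 - 1 / q))) *
        ⨆ t : {t : ℝ // 0 < t}, ENNReal.ofReal t.1 *
          ((1 / ENNReal.ofReal t.1) * ∫⁻ s in Set.Ioi t.1,
            ENNReal.ofReal (Set.indicator (Set.Ioo 0 T) (fun _ => 1 / T) s) ^ q) ^ (1 / q) := by
  have hq0 : (0:ℝ) < q := lt_trans one_pos hq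
  have hq' : (0:ℝ) < 1/q := by positivity
  have hw : (0:ℝ) < 1 - 1/q := by rw [sub_pos, div_lt_one hq0]; exact hq
  have hCK : ((1/q) ^ (-(1/q)) * (1 - 1/q) ^ (-(1 - 1/q))) *
      ((1 - 1/q) ^ (1 - 1/q) * (1/q) ^ (1/q)) = 1 := by
    rw [Real.rpow_neg hq'.le, Real.rpow_neg hw.le, mul_comm (((1/q:ℝ)) ^ (1/q))⁻¹,
      mul_mul_mul_comm, inv_mul_cancel₀ (Real.rpow_pos_of_pos hw _).ne',
      inv_mul_cancel₀ (Real.rpow_pos_of_pos hq' _).ne', one_mul]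
  have hterm_lt : ∀ t : ℝ, 0 < t → t < T →
      ENNReal.ofReal t * ((1 / ENNReal.ofReal t) * ∫⁻ s in Set.Ioi t,
        ENNReal.ofReal (Set.indicator (Set.Ioo 0 T) (fun _ => 1 / T) s) ^ q) ^ (1 / q)
      = ENNReal.ofReal (t ^ (1 - 1/q) * (T - t) ^ (1/q) * (1/T)) := by
    intro t ht htT
    rw [ws_lint_ind hq hT ht,
      show (1:ℝ≥0∞)/ENNReal.ofReal t = ENNReal.ofReal t⁻¹ by
        rw [one_div, ← ENNReal.ofReal_inv_of_pos ht],
      ← ENNReal.ofReal_mul (Real.rpow_nonneg (one_div_pos.mpr hT).le q),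
      ← ENNReal.ofReal_mul (inv_nonneg.mpr ht.le),
      ENNReal.ofReal_rpow_of_nonneg (mul_nonneg (inv_nonneg.mpr ht.le)
        (mul_nonneg (Real.rpow_nonneg (one_div_pos.mpr hT).le q)
          (sub_nonneg.mpr htT.le))) hq'.le,
      ← ENNReal.ofReal_mul ht.le, ws_real4 hq ht hT htT]
  have hSup : (⨆ t : {t : ℝ // 0 < t}, ENNReal.ofReal t.1 *
      ((1 / ENNReal.ofReal t.1) * ∫⁻ s in Set.Ioi t.1,
        ENNReal.ofReal (Set.indicator (Set.Ioo 0 T) (fun _ => 1 / T) s) ^ q) ^ (1 / q))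
      = ENNReal.ofReal ((1 - 1/q) ^ (1 - 1/q) * (1/q) ^ (1/q)) := by
    apply le_antisymm
    · apply iSup_le
      rintro ⟨t, ht⟩
      show ENNReal.ofReal t * ((1 / ENNReal.ofReal t) * ∫⁻ s in Set.Ioi t,
        ENNReal.ofReal (Set.indicator (Set.Ioo 0 T) (fun _ => 1 / T) s) ^ q) ^ (1 / q) ≤ _
      rcases lt_or_ge t T with htT | htT
      · rw [hterm_lt t ht htT]
        apply ENNReal.ofReal_le_ofReal
        rw [mul_one_div, div_le_iff₀ hT]
        exact ws_amgm hq hT ht htT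
      · rw [ws_lint_ind hq hT ht, ENNReal.ofReal_eq_zero.mpr (by linarith : T - t ≤ 0),
          mul_zero, mul_zero, ENNReal.zero_rpow_of_pos hq', mul_zero]
        exact zero_le
    · have h0 : (0:ℝ) < (1 - 1/q) * T := mul_pos hw hT
      have hlt : (1 - 1/q) * T < T := by nlinarith [mul_pos hq' hT]
      refine le_trans (le_of_eq ?_) (le_iSup (fun u : {t : ℝ // 0 < t} =>
        ENNReal.ofReal u.1 * ((1 / ENNReal.ofReal u.1) * ∫⁻ s in Set.Ioi u.1,
          ENNReal.ofReal (Set.indicator (Set.Ioo 0 T) (fun _ => 1 / T) s) ^ q) ^ (1 / q))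
        ⟨(1 - 1/q) * T, h0⟩)
      show _ = ENNReal.ofReal ((1 - 1/q) * T) * ((1 / ENNReal.ofReal ((1 - 1/q) * T)) *
        ∫⁻ s in Set.Ioi ((1 - 1/q) * T),
          ENNReal.ofReal (Set.indicator (Set.Ioo 0 T) (fun _ => 1 / T) s) ^ q) ^ (1 / q)
      rw [hterm_lt _ h0 hlt, ws_eq_at hq hT]
  rw [ws_lhs4 hT, hSup, ← ENNReal.ofReal_mul (mul_nonneg (Real.rpow_nonneg hq'.le _)
    (Real.rpow_nonneg hw.le _)), hCK, ENNReal.ofReal_one]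

/-- Weak continuous Stechkin inequalities with optimal constants `(q−1)^{-1/q}` and
`(1/q)^{-1/q}(1−1/q)^{-(1−1/q)}`; optimality witnessed by `f(t) = 1/t` and by
`f = (1/T)·χ_{(0,T)}` respectively. -/
theorem weak_stechkin_continuous (q : ℝ) (hq : 1 < q) :
    (∀ f : ℝ → ℝ, Measurable f → (∀ t, 0 < t → 0 ≤ f t) → AntitoneOn f (Set.Ioi 0) →
      (⨆ t : {t : ℝ // 0 < t}, ENNReal.ofReal t.1 *
          ((1 / ENNReal.ofReal t.1) * ∫⁻ s in Set.Ioi t.1, ENNReal.ofReal (f s) ^ q) ^ (1 / q)) ≤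
        ENNReal.ofReal ((q - 1) ^ (-(1 / q))) *
          ⨆ t : {t : ℝ // 0 < t}, ENNReal.ofReal (t.1 * f t.1)) ∧
    (⨆ t : {t : ℝ // 0 < t}, ENNReal.ofReal t.1 *
        ((1 / ENNReal.ofReal t.1) * ∫⁻ s in Set.Ioi t.1,
          ENNReal.ofReal (1 / s) ^ q) ^ (1 / q)) =
      ENNReal.ofReal ((q - 1) ^ (-(1 / q))) *
        ⨆ t : {t : ℝ // 0 < t}, ENNReal.ofReal (t.1 * (1 / t.1)) ∧
    (∀ f : ℝ → ℝ, Measurable f → (∀ t, 0 < t → 0 ≤ f t) → AntitoneOn f (Set.Ioi 0) →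
      (⨆ t : {t : ℝ // 0 < t}, ENNReal.ofReal (t.1 * f t.1)) ≤
        ENNReal.ofReal ((1 / q) ^ (-(1 / q)) * (1 - 1 / q) ^ (-(1 - 1 / q))) *
          ⨆ t : {t : ℝ // 0 < t}, ENNReal.ofReal t.1 *
            ((1 / ENNReal.ofReal t.1) * ∫⁻ s in Set.Ioi t.1,
              ENNReal.ofReal (f s) ^ q) ^ (1 / q)) ∧
    (∀ T : ℝ, 0 < T →
      (⨆ t : {t : ℝ // 0 < t},
          ENNReal.ofReal (t.1 * Set.indicator (Set.Ioo 0 T) (fun _ => 1 / T) t.1)) =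
        ENNReal.ofReal ((1 / q) ^ (-(1 / q)) * (1 - 1 / q) ^ (-(1 - 1 / q))) *
          ⨆ t : {t : ℝ // 0 < t}, ENNReal.ofReal t.1 *
            ((1 / ENNReal.ofReal t.1) * ∫⁻ s in Set.Ioi t.1,
              ENNReal.ofReal (Set.indicator (Set.Ioo 0 T) (fun _ => 1 / T) s) ^ q) ^ (1 / q)) :=
  ⟨fun f hf hn ha => ws_part1 hq f hf hn ha, ws_part2 hq,
   fun f hf hn ha => ws_part3 hq f hf hn ha, fun T hT => ws_part4 hq T hT⟩
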